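/- Let p(x) = (x √(2π))⁻¹ exp(−(log x)²/2) for x > 0 be the density of the standard log-normal distribution, and for a ∈ [−1, 1] define q_a(x) = (1 + a sin(2π log x)) p(x) on (0, ∞). Then: (i) q_a(x) ≥ 0 for all x > 0; (ii) ∫₀^∞ q_a(x) dx = 1, so q_a is a probability density; and (iii) for every natural number n, ∫₀^∞ xⁿ q_a(x) dx = exp(n²/2), independently of a. Hence all members of the family {q_a : a ∈ [−1, 1]} have the same moment sequence as the log-normal distribution. -/

import Mathlib

open Real MeasureTheory

/-- The density of the standard log-normal distribution on `(0, ∞)`. -/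
noncomputable def logNormalDensity (x : ℝ) : ℝ :=
  (x * Real.sqrt (2 * Real.pi))⁻¹ * Real.exp (-(Real.log x) ^ 2 / 2)

/-- A member of the Stieltjes class of the log-normal distribution. -/
noncomputable def stieltjesDensity (a x : ℝ) : ℝ :=
  (1 + a * Real.sin (2 * Real.pi * Real.log x)) * logNormalDensity x

lemma aux_comp_exp (g : ℝ → ℝ) :
    ∫ x in Set.Ioi (0:ℝ), g x = ∫ y, Real.exp y * g (Real.exp y) := by
  rw [← Real.range_exp, ← Set.image_univ,
    integral_image_eq_integral_abs_deriv_smul MeasurableSet.univ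
      (fun x _ => (Real.hasDerivAt_exp x).hasDerivWithinAt) Real.exp_injective.injOn g,
    setIntegral_univ]
  simp [abs_of_pos (Real.exp_pos _), smul_eq_mul]

lemma aux_sin_gauss_zero :
    ∫ t : ℝ, Real.sin (2 * Real.pi * t) * Real.exp (-t ^ 2 / 2) = 0 := by
  set f : ℝ → ℝ := fun t => Real.sin (2 * Real.pi * t) * Real.exp (-t ^ 2 / 2) with hf
  have h1 : ∫ t, f (-t) = ∫ t, f t := integral_neg_eq_self f volume
  have h2 : ∀ t, f (-t) = -f t := by
    intro t; simp only [hf]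
    rw [show 2 * Real.pi * -t = -(2 * Real.pi * t) by ring, Real.sin_neg]
    ring_nf
  rw [funext h2] at h1
  simp only [integral_neg] at h1
  linarith

lemma aux_gauss_integrable : Integrable (fun t : ℝ => Real.exp (-t ^ 2 / 2)) := by
  have := integrable_exp_neg_mul_sq (by norm_num : (0:ℝ) < 1/2)
  convert this using 2 with t
  ring_nf

lemma aux_sin_gauss_integrable :
    Integrable (fun t : ℝ => Real.sin (2 * Real.pi * t) * Real.exp (-t ^ 2 / 2)) := by
  refine aux_gauss_integrable.bdd_mul (c := 1) ?_ (Filter.Eventually.of_forall fun t => ?_)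
  · exact (Real.continuous_sin.comp (by continuity)).aestronglyMeasurable
  · simpa using Real.abs_sin_le_one _

lemma aux_gauss_total : ∫ t : ℝ, Real.exp (-t ^ 2 / 2) = Real.sqrt (2 * Real.pi) := by
  have := integral_gaussian (1/2 : ℝ)
  rw [show Real.pi / (1/2 : ℝ) = 2 * Real.pi by ring] at this
  rw [← this]
  congr 1 with t
  ring_nf

lemma aux_main (a : ℝ) (n : ℕ) :
    ∫ y : ℝ, (1 + a * Real.sin (2 * Real.pi * y)) *
      ((Real.sqrt (2 * Real.pi))⁻¹ * Real.exp ((n : ℝ) * y - y ^ 2 / 2)) =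
      Real.exp ((n : ℝ) ^ 2 / 2) := by
  have key : ∀ y : ℝ, (1 + a * Real.sin (2 * Real.pi * y)) *
      ((Real.sqrt (2 * Real.pi))⁻¹ * Real.exp ((n : ℝ) * y - y ^ 2 / 2)) =
      (Real.exp ((n : ℝ) ^ 2 / 2) * (Real.sqrt (2 * Real.pi))⁻¹) *
        ((1 + a * Real.sin (2 * Real.pi * y)) * Real.exp (-(y - n) ^ 2 / 2)) := by
    intro y
    have e : Real.exp ((n : ℝ) * y - y ^ 2 / 2)
        = Real.exp ((n : ℝ) ^ 2 / 2) * Real.exp (-(y - n) ^ 2 / 2) := by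
      rw [← Real.exp_add]; congr 1; ring
    rw [e]; ring
  simp_rw [key]
  rw [integral_const_mul]
  have shift : ∫ y : ℝ, (1 + a * Real.sin (2 * Real.pi * y)) * Real.exp (-(y - n) ^ 2 / 2)
      = ∫ t : ℝ, (1 + a * Real.sin (2 * Real.pi * t)) * Real.exp (-t ^ 2 / 2) := by
    rw [← integral_add_right_eq_self
      (fun y => (1 + a * Real.sin (2 * Real.pi * y)) * Real.exp (-(y - n) ^ 2 / 2)) (n : ℝ)]
    congr 1 with t
    rw [show 2 * Real.pi * (t + n) = 2 * Real.pi * t + (n : ℕ) * (2 * Real.pi) by ring,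
      Real.sin_add_nat_mul_two_pi]
    ring_nf
  rw [shift]
  have split : ∫ t : ℝ, (1 + a * Real.sin (2 * Real.pi * t)) * Real.exp (-t ^ 2 / 2)
      = (∫ t : ℝ, Real.exp (-t ^ 2 / 2))
        + a * ∫ t : ℝ, Real.sin (2 * Real.pi * t) * Real.exp (-t ^ 2 / 2) := by
    rw [← integral_const_mul, ← integral_add aux_gauss_integrable
      (aux_sin_gauss_integrable.const_mul a)]
    congr 1 with t
    ring
  rw [split, aux_sin_gauss_zero, aux_gauss_total, mul_zero, add_zero, mul_assoc,
    inv_mul_cancel₀ (by positivity : Real.sqrt (2 * Real.pi) ≠ 0), mul_one]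

/-- **The Stieltjes class of the log-normal.** For `a ∈ [−1, 1]`, the function
`q_a(x) = (1 + a sin(2π log x)) p(x)` is a probability density on `(0, ∞)`
whose `n`-th moment is `exp(n²/2)`, independently of `a`.  Hence all members
of the family share the moment sequence of the log-normal distribution. -/
theorem stieltjes_class_lognormal (a : ℝ) (ha : a ∈ Set.Icc (-1 : ℝ) 1) :
    (∀ x : ℝ, 0 < x → 0 ≤ stieltjesDensity a x) ∧
      (∫ x in Set.Ioi (0 : ℝ), stieltjesDensity a x = 1) ∧
      (∀ n : ℕ, ∫ x in Set.Ioi (0 : ℝ), x ^ n * stieltjesDensity a x =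
        Real.exp ((n : ℝ) ^ 2 / 2)) := by
  obtain ⟨ha1, ha2⟩ := ha
  have hmom : ∀ n : ℕ, ∫ x in Set.Ioi (0 : ℝ), x ^ n * stieltjesDensity a x =
      Real.exp ((n : ℝ) ^ 2 / 2) := by
    intro n
    rw [aux_comp_exp (fun x => x ^ n * stieltjesDensity a x)]
    rw [← aux_main a n]
    congr 1 with y
    simp only [stieltjesDensity, logNormalDensity, Real.log_exp]
    rw [← Real.exp_nat_mul, mul_inv, ← Real.exp_neg]
    have e : Real.exp ((n : ℝ) * y - y ^ 2 / 2)
        = Real.exp y * Real.exp ((n : ℝ) * y) * (Real.exp (-y) * Real.exp (-y ^ 2 / 2)) := by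
      rw [← Real.exp_add, ← Real.exp_add, ← Real.exp_add]; congr 1; ring
    rw [e]; ring
  refine ⟨?_, ?_, hmom⟩
  · intro x hx
    have h1 : 0 ≤ 1 + a * Real.sin (2 * Real.pi * Real.log x) := by
      nlinarith [Real.neg_one_le_sin (2 * Real.pi * Real.log x),
        Real.sin_le_one (2 * Real.pi * Real.log x)]
    have h2 : 0 ≤ logNormalDensity x := by
      unfold logNormalDensity; positivity
    exact mul_nonneg h1 h2
  · have := hmom 0
    simpa using this
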